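/- (Theorem 1, non-monotone case) Let k ≥ 2, let g : (k+1)^𝒳 → ℝ≥0 be a normalized k-submodular function (not necessarily monotone), w : 𝒳 → ℝ>0 a positive weight function, τ > 0 and ε ∈ (0,1], and suppose there exists a k-set v with g(v) ≥ τ and w(v) ≤ W̄. Then the k-set 𝐬 returned by Algorithm 1 with inputs (τ, W̄, ε) satisfies w(𝐬) ≤ ((4−ε)/(3ε))·W̄ and g(𝐬) ≥ (1−ε)τ/3. -/

import Mathlib

/-- A `k`-set: an assignment of each ground element to one of `k` parts or to none
(`none` meaning the element belongs to no part).  This encodes a tuple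
`(S_1, …, S_k)` of pairwise disjoint subsets of `X`. -/
abbrev KSet (X : Type*) (k : ℕ) := X → Option (Fin k)

namespace KSet

variable {X : Type*} {k : ℕ}

/-- The empty `k`-set `𝟎 = (∅, …, ∅)`. -/
def bot (X : Type*) (k : ℕ) : KSet X k := fun _ => none

/-- `le s t` is the partial order `s ⊑ t`, i.e. `Sᵢ ⊆ Tᵢ` for every `i ∈ [k]`. -/
def le (s t : KSet X k) : Prop := ∀ (x : X) (i : Fin k), s x = some i → t x = some i

/-- The meet `s ⊓ t`, whose `i`-th component is `Sᵢ ∩ Tᵢ`. -/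
def meet (s t : KSet X k) : KSet X k := fun x => if s x = t x then s x else none

/-- The join `s ⊔ t`, whose `i`-th component is `(Sᵢ ∪ Tᵢ) \ ⋃_{j ≠ i} (Sⱼ ∪ Tⱼ)`. -/
def join (s t : KSet X k) : KSet X k := fun x =>
  match s x, t x with
  | none, b => b
  | some i, none => some i
  | some i, some j => if i = j then some i else none

/-- The `k`-set `(x, i)` whose only nonempty component is `Sᵢ = {x}`. -/
def single [DecidableEq X] (x : X) (i : Fin k) : KSet X k :=
  fun y => if y = x then some i else none

/-- `s ⊔ (x, i)`: add the element `x` to the `i`-th part of `s`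
(intended for `x ∉ E(s)`). -/
def add [DecidableEq X] (s : KSet X k) (x : X) (i : Fin k) : KSet X k :=
  Function.update s x (some i)

end KSet

/-- The marginal gain `Δ_{x,i} g (s) = g (s ⊔ (x,i)) - g s`. -/
def marg {X : Type*} [DecidableEq X] {k : ℕ} (g : KSet X k → ℝ) (s : KSet X k)
    (x : X) (i : Fin k) : ℝ :=
  g (KSet.add s x i) - g s

/-- `g` is `k`-submodular: `g (s ⊓ t) + g (s ⊔ t) ≤ g s + g t` for all `k`-sets. -/
def KSubmodular {X : Type*} {k : ℕ} (g : KSet X k → ℝ) : Prop :=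
  ∀ s t : KSet X k, g (KSet.meet s t) + g (KSet.join s t) ≤ g s + g t

/-- `g` is monotone with respect to `⊑`. -/
def KMonotone {X : Type*} {k : ℕ} (g : KSet X k → ℝ) : Prop :=
  ∀ s t : KSet X k, KSet.le s t → g s ≤ g t

/-- The weight `w(s) = ∑_{x ∈ E(s)} w x` of a `k`-set. -/
def wtot {X : Type*} [Fintype X] {k : ℕ} (w : X → ℝ) (s : KSet X k) : ℝ :=
  ∑ x ∈ Finset.univ.filter (fun x => s x ≠ none), w x

/-- A greedy chain for `g`: `c 0 = 𝟎` and each step adds one new element at a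
position maximizing the marginal gain over `i ∈ [k]`. -/
def GreedyChain {X : Type*} [DecidableEq X] {k : ℕ} (g : KSet X k → ℝ) (m : ℕ)
    (c : ℕ → KSet X k) : Prop :=
  c 0 = KSet.bot X k ∧
  ∀ p, p < m → ∃ (xp : X) (ip : Fin k),
    c p xp = none ∧
    c (p + 1) = KSet.add (c p) xp ip ∧
    ∀ i : Fin k, marg g (c p) xp i ≤ marg g (c p) xp ip

/-- A choice of position in `[k]` maximizing `f`. -/
noncomputable def argmaxFin {k : ℕ} [NeZero k] (f : Fin k → ℝ) : Fin k :=
  Classical.choose (Finset.exists_max_image Finset.univ f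
    ⟨⟨0, Nat.pos_of_ne_zero (NeZero.ne k)⟩, Finset.mem_univ _⟩)

open Classical in
/-- One step of Algorithm 1, processing the arriving element `x` with current
solution `s`, threshold `τ`, density threshold `θ` and cost upper bound `A`:
if `x` is big (`w x ≤ A` and `max_i g((x,i)) ≥ τ`) then restart from `(x,i')`
with `i'` maximizing `g((x,i))`; otherwise add `(x,i')` with `i'` maximizing the
marginal gain, provided `Δ_{x,i'}g(s)/w(x) ≥ θ` and `w(s) + w(x) ≤ A`. -/
noncomputable def alg1Step {X : Type*} [Fintype X] [DecidableEq X] {k : ℕ} [NeZero k]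
    (g : KSet X k → ℝ) (w : X → ℝ) (τ θ A : ℝ) (s : KSet X k) (x : X) : KSet X k :=
  if w x ≤ A ∧ τ ≤ g (KSet.single x (argmaxFin fun i => g (KSet.single x i))) then
    KSet.single x (argmaxFin fun i => g (KSet.single x i))
  else if θ ≤ marg g s x (argmaxFin fun i => marg g s x i) / w x ∧ wtot w s + w x ≤ A then
    KSet.add s x (argmaxFin fun i => marg g s x i)
  else s

/-- Algorithm 1: starting from `𝟎`, process the elements of the ground set in
their arrival order `order`. -/
noncomputable def alg1 {X : Type*} [Fintype X] [DecidableEq X] {k : ℕ} [NeZero k]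
    (g : KSet X k → ℝ) (w : X → ℝ) (τ θ A : ℝ) (order : List X) : KSet X k :=
  order.foldl (alg1Step g w τ θ A) (KSet.bot X k)

/-- `x` is a big element: `w x ≤ A` and `max_{i ∈ [k]} g((x,i)) ≥ τ`. -/
def IsBig {X : Type*} [DecidableEq X] {k : ℕ} (g : KSet X k → ℝ) (w : X → ℝ)
    (τ A : ℝ) (x : X) : Prop :=
  w x ≤ A ∧ ∃ i : Fin k, τ ≤ g (KSet.single x i)


section Aux

variable {X : Type*} [DecidableEq X] {k : ℕ}

lemma marg_antitone {g : KSet X k → ℝ} (hsub : KSubmodular g) {s t : KSet X k}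
    (hle : KSet.le s t) {x : X} (hs : s x = none) (ht : t x = none) (i : Fin k) :
    marg g t x i ≤ marg g s x i := by
  have h := hsub (KSet.add s x i) t
  have hmeet : KSet.meet (KSet.add s x i) t = s := by
    funext y
    by_cases hyx : y = x
    · subst hyx
      simp [KSet.meet, KSet.add, Function.update_self, ht, hs]
    · simp only [KSet.meet, KSet.add, Function.update_of_ne hyx]
      cases hsy : s y with
      | none => simp
      | some m => simp [hle y m hsy]
  have hjoin : KSet.join (KSet.add s x i) t = KSet.add t x i := by
    funext y
    by_cases hyx : y = x
    · subst hyx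
      simp [KSet.join, KSet.add, Function.update_self, ht]
    · simp only [KSet.join, KSet.add, Function.update_of_ne hyx]
      cases hsy : s y with
      | none => simp
      | some m => simp [hle y m hsy]
  rw [hmeet, hjoin] at h
  simp only [marg]
  linarith

lemma marg_pair {g : KSet X k → ℝ} (hsub : KSubmodular g) {s : KSet X k} {x : X}
    (hs : s x = none) {i j : Fin k} (hij : i ≠ j) :
    0 ≤ marg g s x i + marg g s x j := by
  have h := hsub (KSet.add s x i) (KSet.add s x j)
  have hmeet : KSet.meet (KSet.add s x i) (KSet.add s x j) = s := by
    funext y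
    by_cases hyx : y = x
    · subst hyx
      simp [KSet.meet, KSet.add, Function.update_self, hs, hij]
    · simp [KSet.meet, KSet.add, Function.update_of_ne hyx]
  have hjoin : KSet.join (KSet.add s x i) (KSet.add s x j) = s := by
    funext y
    by_cases hyx : y = x
    · subst hyx
      simp [KSet.join, KSet.add, Function.update_self, hs, hij]
    · simp only [KSet.join, KSet.add, Function.update_of_ne hyx]
      cases hsy : s y with
      | none => simp
      | some m => simp
  rw [hmeet, hjoin] at h
  simp only [marg]
  linarith

lemma key_step (hk : 2 ≤ k) {g : KSet X k → ℝ} (hsub : KSubmodular g)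
    {s o : KSet X k} (hle : KSet.le s o) {x : X} (hsx : s x = none)
    {i' : Fin k} (hmax : ∀ i, marg g s x i ≤ marg g s x i') (hpos : 0 ≤ marg g s x i') :
    g o ≤ g (Function.update o x (some i')) + 2 * marg g s x i' := by
  obtain ⟨j, hj⟩ : ∃ j : Fin k, j ≠ i' := by
    by_cases h : (i' : ℕ) = 0
    · refine ⟨⟨1, by omega⟩, fun hc => ?_⟩
      rw [← hc] at h; simp at h
    · refine ⟨⟨0, by omega⟩, fun hc => ?_⟩
      rw [← hc] at h; simp at h
  cases ho : o x with
  | none =>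
    have h1 := marg_pair hsub ho (Ne.symm hj)
    have h2 := marg_antitone hsub hle hsx ho j
    have h3 := hmax j
    have : Function.update o x (some i') = KSet.add o x i' := rfl
    rw [this]
    simp only [marg] at *
    linarith
  | some m =>
    by_cases hm : m = i'
    · have : Function.update o x (some i') = o := by
        funext y
        by_cases hy : y = x
        · subst hy; rw [Function.update_self, ho, hm]
        · rw [Function.update_of_ne hy]
      rw [this]; linarith
    · set o'' := Function.update o x none with ho''def
      have ho'' : o'' x = none := Function.update_self x none o
      have hle'' : KSet.le s o'' := by
        intro y i hy
        by_cases hyx : y = x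
        · subst hyx; rw [hsx] at hy; exact absurd hy (by simp)
        · rw [ho''def, Function.update_of_ne hyx]; exact hle y i hy
      have hoeq : o = KSet.add o'' x m := by
        funext y
        by_cases hy : y = x
        · subst hy
          simp [KSet.add, Function.update_self, ho]
        · simp [KSet.add, ho''def, Function.update_of_ne hy]
      have hoeq' : Function.update o x (some i') = KSet.add o'' x i' := by
        funext y
        by_cases hy : y = x
        · subst hy; simp [KSet.add, Function.update_self]
        · simp [KSet.add, ho''def, Function.update_of_ne hy]
      have h1 := marg_antitone hsub hle'' hsx ho'' m
      have h2 := marg_pair hsub ho'' (Ne.symm (show m ≠ i' from hm))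
      have h3 := hmax m
      rw [hoeq', show g o = g (KSet.add o'' x m) from by rw [← hoeq]]
      simp only [marg] at *
      linarith

lemma argmaxFin_le {k : ℕ} [NeZero k] (f : Fin k → ℝ) (i : Fin k) : f i ≤ f (argmaxFin f) := by
  have h := Classical.choose_spec (Finset.exists_max_image Finset.univ f
    ⟨⟨0, Nat.pos_of_ne_zero (NeZero.ne k)⟩, Finset.mem_univ _⟩)
  exact h.2 i (Finset.mem_univ i)

section Wt

variable [Fintype X]

lemma filter_add (s : KSet X k) (x : X) (i : Fin k) :
    Finset.univ.filter (fun y => KSet.add s x i y ≠ none)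
      = insert x (Finset.univ.filter (fun y => s y ≠ none)) := by
  ext y
  by_cases h : y = x
  · subst h; simp only [Finset.mem_filter, Finset.mem_univ, Finset.mem_insert, true_and]; simp [KSet.add, Function.update_self]
  · simp only [Finset.mem_filter, Finset.mem_univ, Finset.mem_insert, true_and]; simp [KSet.add, Function.update_of_ne h, h]

lemma wtot_add_of_none (w : X → ℝ) {s : KSet X k} {x : X} (i : Fin k) (hs : s x = none) :
    wtot w (KSet.add s x i) = wtot w s + w x := by
  unfold wtot
  rw [filter_add, Finset.sum_insert (by simp [hs])]
  ring

lemma wtot_add_le (w : X → ℝ) (hw : ∀ y, 0 ≤ w y) (s : KSet X k) (x : X) (i : Fin k) :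
    wtot w (KSet.add s x i) ≤ wtot w s + w x := by
  by_cases hs : s x = none
  · rw [wtot_add_of_none w i hs]
  · have : wtot w (KSet.add s x i) = wtot w s := by
      unfold wtot
      rw [filter_add, Finset.insert_eq_self.2 (by simp [hs])]
    rw [this]
    have := hw x
    linarith

lemma wtot_single (w : X → ℝ) (x : X) (i : Fin k) :
    wtot w (KSet.single x i) = w x := by
  have h : Finset.univ.filter (fun y => KSet.single x i y ≠ none) = {x} := by
    ext y
    by_cases h : y = x <;> simp [KSet.single, h]
  rw [wtot, h, Finset.sum_singleton]

lemma wtot_bot' (w : X → ℝ) : wtot w (KSet.bot X k) = 0 := by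
  simp [wtot, KSet.bot]

lemma wtot_nonneg (w : X → ℝ) (hw : ∀ y, 0 ≤ w y) (s : KSet X k) : 0 ≤ wtot w s :=
  Finset.sum_nonneg fun y _ => hw y

lemma le_wtot (w : X → ℝ) (hw : ∀ y, 0 ≤ w y) {s : KSet X k} {x : X} (hx : s x ≠ none) :
    w x ≤ wtot w s :=
  Finset.single_le_sum (fun y _ => hw y) (by simp [hx])

end Wt

end Aux

set_option linter.unusedSectionVars false

section Main

variable {X : Type*} [Fintype X] [DecidableEq X] {k : ℕ} [NeZero k]

/-- Weight invariant: the solution always has weight at most `A`. -/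
lemma weight_bound (g : KSet X k → ℝ) (w : X → ℝ) (hw : ∀ x, 0 < w x) (τ θ A : ℝ) :
    ∀ (l : List X) (s : KSet X k), wtot w s ≤ A →
      wtot w (l.foldl (alg1Step g w τ θ A) s) ≤ A := by
  intro l
  induction l with
  | nil => intro s h; exact h
  | cons x l ih =>
    intro s hs
    rw [List.foldl_cons]
    apply ih
    unfold alg1Step
    split_ifs with h1 h2
    · rw [wtot_single]; exact h1.1
    · calc wtot w (KSet.add s x _) ≤ wtot w s + w x :=
            wtot_add_le w (fun y => (hw y).le) s x _
        _ ≤ A := h2.2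
    · exact hs

/-- Once the solution value is at least `τ`, it stays at least `τ`. -/
lemma value_after_big (g : KSet X k → ℝ) (w : X → ℝ) (hw : ∀ x, 0 < w x)
    (τ θ A : ℝ) (hθ : 0 < θ) :
    ∀ (l : List X) (s : KSet X k), τ ≤ g s →
      τ ≤ g (l.foldl (alg1Step g w τ θ A) s) := by
  intro l
  induction l with
  | nil => intro s h; exact h
  | cons x l ih =>
    intro s hs
    rw [List.foldl_cons]
    apply ih
    unfold alg1Step
    split_ifs with h1 h2
    · exact h1.2
    · have hwx := hw x
      have hmarg : θ * w x ≤ marg g s x (argmaxFin fun i => marg g s x i) :=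
        (le_div_iff₀ hwx).mp h2.1
      have hpos : 0 < θ * w x := mul_pos hθ hwx
      have hdef : marg g s x (argmaxFin fun i => marg g s x i)
          = g (KSet.add s x (argmaxFin fun i => marg g s x i)) - g s := rfl
      linarith
    · exact hs

/-- Main induction for the case where no big elements exist. -/
lemma main2 (hk : 2 ≤ k)
    (g : KSet X k → ℝ) (hsub : KSubmodular g)
    (w : X → ℝ) (hw : ∀ x, 0 < w x)
    (τ θ A Wb : ℝ) (hθ : 0 < θ)
    (v : KSet X k) (hwv : wtot w v ≤ Wb)
    (hnobig : ∀ x, ¬ IsBig g w τ A x) :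
    ∀ (l : List X) (s : KSet X k), l.Nodup → (∀ y ∈ l, s y = none) →
      wtot w s ≤ A → θ * wtot w s ≤ g s →
      θ * wtot w (l.foldl (alg1Step g w τ θ A) s) ≤ g (l.foldl (alg1Step g w τ θ A) s) ∧
      wtot w s ≤ wtot w (l.foldl (alg1Step g w τ θ A) s) ∧
      (A - Wb < wtot w (l.foldl (alg1Step g w τ θ A) s) ∨
        ∀ o : KSet X k, KSet.le s o →
          (∀ y, o y ≠ none → s y ≠ none ∨ (o y = v y ∧ y ∈ l)) →
          g o ≤ 3 * g (l.foldl (alg1Step g w τ θ A) s) - 2 * g s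
               + θ * ∑ y ∈ Finset.univ.filter (fun y => o y ≠ none ∧ s y = none), w y) := by
  intro l
  induction l with
  | nil =>
    intro s _ _ hA hθs
    refine ⟨hθs, le_refl _, Or.inr fun o hle ho => ?_⟩
    have hos : o = s := by
      funext y
      cases hsy : s y with
      | some m => exact hle y m hsy
      | none =>
        by_cases hoy : o y = none
        · exact hoy
        · rcases ho y hoy with h | h
          · exact absurd hsy h
          · exact absurd h.2 (List.not_mem_nil)
    rw [hos]
    simp only [List.foldl_nil]
    have hθsum : 0 ≤ θ * ∑ y ∈ Finset.univ.filter (fun y => s y ≠ none ∧ s y = none), w y :=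
      mul_nonneg hθ.le (Finset.sum_nonneg fun y _ => (hw y).le)
    linarith
  | cons x l ih =>
    intro s hnd hl hA hθs
    have hsx : s x = none := hl x (List.mem_cons_self)
    have hxl : x ∉ l := (List.nodup_cons.mp hnd).1
    have hndl : l.Nodup := (List.nodup_cons.mp hnd).2
    have hc1 : ¬ (w x ≤ A ∧
        τ ≤ g (KSet.single x (argmaxFin fun i => g (KSet.single x i)))) :=
      fun h => hnobig x ⟨h.1, _, h.2⟩
    set i' := argmaxFin fun i => marg g s x i with hi'def
    rw [List.foldl_cons]
    by_cases hc2 : θ ≤ marg g s x i' / w x ∧ wtot w s + w x ≤ A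
    · -- accepted
      have hstep : alg1Step g w τ θ A s x = KSet.add s x i' := by
        unfold alg1Step
        rw [if_neg hc1, if_pos hc2]
      set s' := KSet.add s x i' with hs'def
      have hwx := hw x
      have hmarg : θ * w x ≤ marg g s x i' := (le_div_iff₀ hwx).mp hc2.1
      have hmargpos : 0 ≤ marg g s x i' := le_trans (mul_pos hθ hwx).le hmarg
      have hgs' : g s' = g s + marg g s x i' := by simp [marg, hs'def]
      have hws' : wtot w s' = wtot w s + w x := wtot_add_of_none w i' hsx
      have hl' : ∀ y ∈ l, s' y = none := by
        intro y hy
        have hyx : y ≠ x := fun h => hxl (h ▸ hy)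
        rw [hs'def, KSet.add, Function.update_of_ne hyx]
        exact hl y (List.mem_cons_of_mem x hy)
      have hA' : wtot w s' ≤ A := by rw [hws']; exact hc2.2
      have hθs' : θ * wtot w s' ≤ g s' := by
        rw [hws', hgs']; rw [mul_add]; linarith
      obtain ⟨ih1, ih2, ih3⟩ := ih s' hndl hl' hA' hθs'
      rw [hstep]
      refine ⟨ih1, by rw [hws'] at ih2; linarith, ?_⟩
      rcases ih3 with h | hR
      · exact Or.inl h
      · refine Or.inr fun o hle ho => ?_
        set o' := Function.update o x (some i') with ho'def
        have hle' : KSet.le s' o' := by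
          intro y m hy
          by_cases hyx : y = x
          · subst hyx
            rw [hs'def, KSet.add, Function.update_self] at hy
            rw [ho'def, Function.update_self]; exact hy
          · rw [hs'def, KSet.add, Function.update_of_ne hyx] at hy
            rw [ho'def, Function.update_of_ne hyx]
            exact hle y m hy
        have ho' : ∀ y, o' y ≠ none → s' y ≠ none ∨ (o' y = v y ∧ y ∈ l) := by
          intro y hy
          by_cases hyx : y = x
          · subst hyx
            left; rw [hs'def, KSet.add, Function.update_self]; simp
          · rw [ho'def, Function.update_of_ne hyx] at hy ⊢
            rcases ho y hy with h | h
            · left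
              rw [hs'def, KSet.add, Function.update_of_ne hyx]; exact h
            · right
              refine ⟨h.1, ?_⟩
              rcases List.mem_cons.mp h.2 with h' | h'
              · exact absurd h' hyx
              · exact h'
        have hkey : g o ≤ g o' + 2 * marg g s x i' :=
          key_step hk hsub hle hsx (fun i => argmaxFin_le _ i) hmargpos
        have hsum : ∑ y ∈ Finset.univ.filter (fun y => o' y ≠ none ∧ s' y = none), w y
            ≤ ∑ y ∈ Finset.univ.filter (fun y => o y ≠ none ∧ s y = none), w y := by
          apply Finset.sum_le_sum_of_subset_of_nonneg
          · intro y hy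
            simp only [Finset.mem_filter, Finset.mem_univ, true_and] at hy ⊢
            have hyx : y ≠ x := by
              intro h
              subst h
              have h2 := hy.2
              rw [hs'def, KSet.add, Function.update_self] at h2
              exact absurd h2 (by simp)
            constructor
            · rw [ho'def, Function.update_of_ne hyx] at hy; exact hy.1
            · rw [hs'def, KSet.add, Function.update_of_ne hyx] at hy; exact hy.2
          · intro y _ _; exact (hw y).le
        have := hR o' hle' ho'
        have hθsum := mul_le_mul_of_nonneg_left hsum hθ.le
        rw [hgs'] at this
        linarith
    · -- rejected
      have hstep : alg1Step g w τ θ A s x = s := by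
        unfold alg1Step
        rw [if_neg hc1, if_neg hc2]
      rw [hstep]
      obtain ⟨ih1, ih2, ih3⟩ := ih s hndl (fun y hy => hl y (List.mem_cons_of_mem x hy)) hA hθs
      refine ⟨ih1, ih2, ?_⟩
      rcases ih3 with h | hR
      · exact Or.inl h
      · have huse : ∀ o : KSet X k, KSet.le s o →
            (∀ y, o y ≠ none → s y ≠ none ∨ (o y = v y ∧ y ∈ x :: l)) → o x = none →
            g o ≤ 3 * g (List.foldl (alg1Step g w τ θ A) s l) - 2 * g s
               + θ * ∑ y ∈ Finset.univ.filter (fun y => o y ≠ none ∧ s y = none), w y := by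
          intro o hle ho hox
          refine hR o hle fun y hy => (ho y hy).imp id fun h => ⟨h.1, ?_⟩
          rcases List.mem_cons.mp h.2 with h' | h'
          · subst h'; exact absurd hox hy
          · exact h'
        by_cases hcap : wtot w s + w x ≤ A
        · -- density rejection
          have hden : marg g s x i' < θ * w x :=
            (div_lt_iff₀ (hw x)).mp (lt_of_not_ge fun h => hc2 ⟨h, hcap⟩)
          refine Or.inr fun o hle ho => ?_
          by_cases hox : o x = none
          · exact huse o hle ho hox
          · obtain ⟨m, hm⟩ : ∃ m, o x = some m := Option.ne_none_iff_exists'.mp hox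
            set o'' := Function.update o x none with ho''def
            have ho''x : o'' x = none := by rw [ho''def]; exact Function.update_self x none o
            have hle'' : KSet.le s o'' := by
              intro y i hy
              by_cases hyx : y = x
              · subst hyx; rw [hsx] at hy; exact absurd hy (by simp)
              · rw [ho''def, Function.update_of_ne hyx]; exact hle y i hy
            have ho''cond : ∀ y, o'' y ≠ none → s y ≠ none ∨ (o'' y = v y ∧ y ∈ x :: l) := by
              intro y hy
              by_cases hyx : y = x
              · subst hyx; exact absurd ho''x hy
              · rw [ho''def, Function.update_of_ne hyx] at hy ⊢
                exact ho y hy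
            have hIH := huse o'' hle'' ho''cond ho''x
            have hoeq : o = KSet.add o'' x m := by
              funext y
              by_cases hy : y = x
              · subst hy; simp [KSet.add, ho''def, Function.update_self, hm]
              · simp [KSet.add, ho''def, Function.update_of_ne hy]
            have hsum : ∑ y ∈ Finset.univ.filter (fun y => o y ≠ none ∧ s y = none), w y
                = w x + ∑ y ∈ Finset.univ.filter (fun y => o'' y ≠ none ∧ s y = none), w y := by
              have hset : Finset.univ.filter (fun y => o y ≠ none ∧ s y = none)
                  = insert x (Finset.univ.filter (fun y => o'' y ≠ none ∧ s y = none)) := by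
                ext y
                by_cases hy : y = x
                · subst hy; simp [hox, hsx]
                · simp [ho''def, Function.update_of_ne hy, hy]
              rw [hset, Finset.sum_insert (by simp [ho''x])]
            have h1 := marg_antitone hsub hle'' hsx ho''x m
            have h2 := argmaxFin_le (fun i => marg g s x i) m
            rw [← hi'def] at h2
            have hgo : g o = g (KSet.add o'' x m) := by rw [← hoeq]
            simp only [marg] at h1 h2 hden
            rw [hsum, hgo]
            linarith
        · -- capacity rejection
          by_cases hxv : v x = none
          · refine Or.inr fun o hle ho => ?_
            have hox : o x = none := by
              by_contra hox
              rcases ho x hox with h | h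
              · exact h hsx
              · rw [hxv] at h; exact hox h.1
            exact huse o hle ho hox
          · have hwxWb : w x ≤ Wb := le_trans (le_wtot w (fun y => (hw y).le) hxv) hwv
            have hlt : A - Wb < wtot w s := by
              have := lt_of_not_ge hcap
              linarith
            exact Or.inl (lt_of_lt_of_le hlt ih2)

end Main

/-- **Theorem 1, non-monotone case.** If `k ≥ 2`, `g` is a (not
necessarily monotone) normalized `k`-submodular function, `w > 0`, `τ > 0`,
`ε ∈ (0,1]` and some `k`-set `v` has `g v ≥ τ` and `w(v) ≤ W̄`, then the output
`𝐬` of Algorithm 1 with inputs `(τ, W̄, ε)` satisfies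
`w(𝐬) ≤ ((4-ε)/(3ε))·W̄` and `g 𝐬 ≥ (1-ε)τ/3`. -/
theorem theorem1_nonmonotone {X : Type*} [Fintype X] [DecidableEq X] {k : ℕ} [NeZero k]
    (hk : 2 ≤ k)
    (g : KSet X k → ℝ) (hnn : ∀ s : KSet X k, 0 ≤ g s) (hsub : KSubmodular g)
    (hnorm : g (KSet.bot X k) = 0)
    (w : X → ℝ) (hw : ∀ x, 0 < w x)
    (τ Wbar ε : ℝ) (hτ : 0 < τ) (hW : 0 < Wbar) (hε0 : 0 < ε) (hε1 : ε ≤ 1)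
    (v : KSet X k) (hgv : τ ≤ g v) (hwv : wtot w v ≤ Wbar)
    (order : List X) (hnodup : order.Nodup) (hfull : ∀ x : X, x ∈ order) :
    wtot w (alg1 g w τ (ε * τ / Wbar) ((4 - ε) / (3 * ε) * Wbar) order) ≤
        (4 - ε) / (3 * ε) * Wbar ∧
      (1 - ε) * τ / 3 ≤ g (alg1 g w τ (ε * τ / Wbar) ((4 - ε) / (3 * ε) * Wbar) order) := by
  have hWne : Wbar ≠ 0 := hW.ne'
  have hεne : ε ≠ 0 := hε0.ne'
  set θ := ε * τ / Wbar with hθdef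
  set A := (4 - ε) / (3 * ε) * Wbar with hAdef
  have hθpos : 0 < θ := by
    rw [hθdef]
    exact div_pos (mul_pos hε0 hτ) hW
  have hApos : 0 < A := by
    rw [hAdef]
    apply mul_pos _ hW
    apply div_pos <;> linarith
  have hWfold : wtot w (alg1 g w τ θ A order) ≤ A := by
    unfold alg1
    apply weight_bound g w hw τ θ A order
    rw [wtot_bot']
    exact hApos.le
  refine ⟨hWfold, ?_⟩
  by_cases hbig : ∃ x, IsBig g w τ A x
  · obtain ⟨x, hx⟩ := hbig
    obtain ⟨l1, l2, horder⟩ := List.append_of_mem (hfull x)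
    have hτ' : τ ≤ g (KSet.single x (argmaxFin fun i => g (KSet.single x i))) := by
      obtain ⟨i, hi⟩ := hx.2
      exact le_trans hi (argmaxFin_le (fun i => g (KSet.single x i)) i)
    have hτfold : τ ≤ g (alg1 g w τ θ A order) := by
      unfold alg1
      rw [horder, List.foldl_append, List.foldl_cons]
      apply value_after_big g w hw τ θ A hθpos
      have hstep : alg1Step g w τ θ A (List.foldl (alg1Step g w τ θ A) (KSet.bot X k) l1) x
          = KSet.single x (argmaxFin fun i => g (KSet.single x i)) := by
        unfold alg1Step
        rw [if_pos ⟨hx.1, hτ'⟩]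
      rw [hstep]
      exact hτ'
    nlinarith [mul_pos hε0 hτ]
  · push_neg at hbig
    have hmain := main2 hk g hsub w hw τ θ A Wbar hθpos v hwv hbig order (KSet.bot X k)
      hnodup (fun y _ => rfl) (by rw [wtot_bot']; exact hApos.le)
      (by rw [wtot_bot', hnorm]; simp)
    unfold alg1
    obtain ⟨h1, h2, h3⟩ := hmain
    set r := List.foldl (alg1Step g w τ θ A) (KSet.bot X k) order with hrdef
    rcases h3 with hcap | hR
    · have hθA : θ * (A - Wbar) = (4 - 4*ε) * τ / 3 := by
        rw [hθdef, hAdef]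
        field_simp
        ring
      have hstep : θ * (A - Wbar) ≤ θ * wtot w r := mul_le_mul_of_nonneg_left hcap.le hθpos.le
      have hcmp : (1 - ε) * τ / 3 ≤ (4 - 4*ε) * τ / 3 := by
        nlinarith [mul_nonneg (show (0:ℝ) ≤ 1 - ε by linarith) hτ.le]
      linarith
    · have hv := hR v (fun y i h => by simp [KSet.bot] at h)
        (fun y _ => Or.inr ⟨rfl, hfull y⟩)
      have hsum : (∑ y ∈ Finset.univ.filter
          (fun y => v y ≠ none ∧ KSet.bot X k y = none), w y) = wtot w v := by
        unfold wtot
        apply Finset.sum_congr _ (fun _ _ => rfl)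
        ext y
        simp [KSet.bot]
      rw [hnorm, hsum] at hv
      have hθv : θ * wtot w v ≤ θ * Wbar := mul_le_mul_of_nonneg_left hwv hθpos.le
      have hθW : θ * Wbar = ε * τ := by
        rw [hθdef]
        field_simp
      linarith
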